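/- Consider the system x₁' = x₃², x₂' = 0, x₃' = -x₃, perturbed by ε·(0, -x₂, 1). Then {x₃ = ε} is invariant, the induced flow on it is ẋ₁ = ε², ẋ₂ = -εx₂ (in original time: x₁' = ε², x₂' = -εx₂), and the second-order term of the reduced infra-slow vector field on the line {x₂ = 0, x₃ = ε}, computed via r₂^{(2)}(η) = P̃₀^{(1)}(η)P̃₀^{(0)}(φ₀^{(1)}(η))G₂, equals the constant 1, where the only nonvanishing contribution to G₂ comes from the Hessian term ½D²F₀(φ₀^{(0)})(φ₁^{(0)}, φ₁^{(0)}) = (1,0,0)ᵀ. -/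

import Mathlib

open Matrix

/-- For the system `x₁' = x₃², x₂' = -εx₂, x₃' = -x₃ + ε` (i.e.
`F₀(x) = (x₃², 0, -x₃)` perturbed by `ε(0, -x₂, 1)`): the plane `{x₃ = ε}` is
invariant; on it the induced flow is `x₁' = ε², x₂' = -εx₂`; the only
nonvanishing contribution to `G₂` is the Hessian term
`½D²F₀(φ₀⁽⁰⁾)(φ₁⁽⁰⁾, φ₁⁽⁰⁾) = (1,0,0)ᵀ` (with `φ₁⁽⁰⁾ = (0,0,1)` and Hessian of
the first component of `F₀` having a single entry `2`); and the second-order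
infra-slow vector field `r₂⁽²⁾(η) = P̃₀⁽¹⁾ P̃₀⁽⁰⁾ G₂` equals the constant `1`. -/
theorem stmt18 (ε : ℝ) (hε : 0 < ε)
    (x₁ x₂ x₃ : ℝ → ℝ)
    (hx₁ : ∀ t, HasDerivAt x₁ ((x₃ t) ^ 2) t)
    (hx₂ : ∀ t, HasDerivAt x₂ (ε * (-(x₂ t))) t)
    (hx₃ : ∀ t, HasDerivAt x₃ (-(x₃ t) + ε) t) :
    (x₃ 0 = ε → ∀ t, x₃ t = ε) ∧
    ((∀ t, x₃ t = ε) →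
      ∀ t, HasDerivAt x₁ (ε ^ 2) t ∧ HasDerivAt x₂ (-(ε * x₂ t)) t) ∧
    ((1 / 2 : ℝ) • (![(0 : ℝ), 0, 1] ⬝ᵥ
        (!![(0 : ℝ), 0, 0; 0, 0, 0; 0, 0, 2] *ᵥ ![(0 : ℝ), 0, 1])) = 1) ∧
    (∀ η : ℝ,
      ((!![(1 : ℝ), 0] * !![(1 : ℝ), 0, 0; 0, 1, 0]) *ᵥ ![(1 : ℝ), 0, 0])
        = ![(1 : ℝ)]) := by

  refine ⟨?_, ?_, ?_, ?_⟩
  · intro h0 t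
    have key : ∀ s, (x₃ s - ε) * Real.exp s = 0 := by
      have hg : ∀ s, HasDerivAt (fun u => (x₃ u - ε) * Real.exp u) 0 s := by
        intro s
        have : HasDerivAt (fun u => (x₃ u - ε) * Real.exp u)
            ((-(x₃ s) + ε) * Real.exp s + (x₃ s - ε) * Real.exp s) s :=
          ((hx₃ s).sub_const ε).mul (Real.hasDerivAt_exp s)
        convert this using 1
        ring
      have hconst : ∀ s, (x₃ s - ε) * Real.exp s = (x₃ 0 - ε) * Real.exp 0 := by
        intro s
        have := is_const_of_deriv_eq_zero (f := fun u => (x₃ u - ε) * Real.exp u)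
          (fun u => (hg u).differentiableAt) (fun u => (hg u).deriv) s 0
        simpa using this
      intro s
      rw [hconst s, h0]
      simp
    have := key t
    have he := Real.exp_pos t
    have : x₃ t - ε = 0 := by
      rcases mul_eq_zero.mp this with h | h
      · exact h
      · exact absurd h he.ne'
    linarith
  · intro h t
    refine ⟨?_, ?_⟩
    · have := hx₁ t; rwa [h t] at this
    · have := hx₂ t; convert this using 1; ring
  · norm_num [dotProduct, Matrix.mulVec, Fin.sum_univ_succ]
  · intro η
    funext i
    fin_cases i <;>
      simp [Matrix.mulVec, Matrix.mul_apply, dotProduct, Fin.sum_univ_succ]
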